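/- Let A be a bialgebra over a field k and let A⁰ ⊆ A^∨ be the set of functionals f such that the family of left translates (ₛf)_{s∈A} spans a finite-dimensional space (the Sweedler dual). Then A⁰ is a linear subspace of A^∨ closed under the convolution product ∗_Δ (where (φ ∗_Δ ψ)(x) = (φ⊗ψ)(Δ(x))), and the counit ε belongs to A⁰; hence (A⁰, ∗_Δ, ε) is an associative unital algebra. -/

import Mathlib

open TensorProduct Coalgebra

/-- Membership in the Sweedler dual: the translates `x ↦ f(xs)` span a
finite-dimensional subspace of the dual. -/
def InSweedlerDual (k : Type*) [Field k] {A : Type*} [Ring A] [Algebra k A]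
    (f : Module.Dual k A) : Prop :=
  FiniteDimensional k
    (Submodule.span k (Set.range fun s : A => f ∘ₗ LinearMap.mulRight k s))

/-- Convolution product on the dual of a coalgebra. -/
noncomputable def convProd {k : Type*} [Field k] {A : Type*} [Ring A] [Bialgebra k A]
    (φ ψ : Module.Dual k A) : Module.Dual k A :=
  (TensorProduct.lid k k).toLinearMap ∘ₗ (TensorProduct.map φ ψ) ∘ₗ comul

section aux

variable {k : Type*} [Field k] {A : Type*} [Ring A] [Bialgebra k A]

lemma convProd_apply_repr (f g : Module.Dual k A) (x : A) {ι : Type*} (r : Coalgebra.Repr k x ι) :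
    convProd f g x = ∑ i ∈ r.index, f (r.left i) * g (r.right i) := by
  simp only [convProd, LinearMap.coe_comp, Function.comp_apply, ← r.eq, map_sum,
    TensorProduct.map_tmul, LinearEquiv.coe_coe, TensorProduct.lid_tmul, smul_eq_mul]

lemma convProd_add_left (f f' g : Module.Dual k A) :
    convProd (f + f') g = convProd f g + convProd f' g := by
  ext x
  simp only [convProd_apply_repr _ _ x (ℛ k x), LinearMap.add_apply]
  rw [← Finset.sum_add_distrib]
  exact Finset.sum_congr rfl fun i _ => by ring

lemma convProd_add_right (f g g' : Module.Dual k A) :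
    convProd f (g + g') = convProd f g + convProd f g' := by
  ext x
  simp only [convProd_apply_repr _ _ x (ℛ k x), LinearMap.add_apply]
  rw [← Finset.sum_add_distrib]
  exact Finset.sum_congr rfl fun i _ => by ring

lemma convProd_smul_left (c : k) (f g : Module.Dual k A) :
    convProd (c • f) g = c • convProd f g := by
  ext x
  simp [convProd_apply_repr _ _ x (ℛ k x), Finset.mul_sum, mul_assoc]

lemma convProd_smul_right (c : k) (f g : Module.Dual k A) :
    convProd f (c • g) = c • convProd f g := by
  ext x
  simp only [convProd_apply_repr _ _ x (ℛ k x), LinearMap.smul_apply, smul_eq_mul,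
    Finset.mul_sum]
  exact Finset.sum_congr rfl fun i _ => by ring

/-- Convolution as a bilinear map. -/
noncomputable def convBil : Module.Dual k A →ₗ[k] Module.Dual k A →ₗ[k] Module.Dual k A :=
  LinearMap.mk₂ k convProd convProd_add_left convProd_smul_left
    convProd_add_right convProd_smul_right

lemma translate_convProd (f g : Module.Dual k A) (s : A) {ι : Type*} (r : Coalgebra.Repr k s ι) :
    (convProd f g) ∘ₗ LinearMap.mulRight k s =
      ∑ i ∈ r.index, convProd (f ∘ₗ LinearMap.mulRight k (r.left i))
        (g ∘ₗ LinearMap.mulRight k (r.right i)) := by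
  ext x
  have hx := ℛ k x
  have hcm : comul (R := k) (x * s) = comul x * comul s := Bialgebra.comul_mul x s
  rw [← hx.eq, ← r.eq] at hcm
  simp only [LinearMap.coe_comp, Function.comp_apply, LinearMap.mulRight_apply,
    LinearMap.coe_sum, Finset.sum_apply]
  rw [convProd]
  simp only [LinearMap.coe_comp, Function.comp_apply, hcm, Finset.sum_mul_sum,
    Algebra.TensorProduct.tmul_mul_tmul, map_sum, TensorProduct.map_tmul,
    LinearEquiv.coe_coe, TensorProduct.lid_tmul, smul_eq_mul]
  rw [Finset.sum_comm]
  refine Finset.sum_congr rfl fun i _ => ?_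
  rw [convProd_apply_repr _ _ x hx]
  simp

end aux

/-- the Sweedler dual `A⁰` is a linear subspace of `A^∨` closed under the
convolution product and containing the counit; with these operations it is an associative
unital algebra. -/
theorem sweedlerDual_subalgebra (k : Type*) [Field k] (A : Type*) [Ring A]
    [Bialgebra k A] :
    InSweedlerDual k (0 : Module.Dual k A) ∧
    (∀ f g : Module.Dual k A, InSweedlerDual k f → InSweedlerDual k g →
      InSweedlerDual k (f + g)) ∧
    (∀ (c : k) (f : Module.Dual k A), InSweedlerDual k f → InSweedlerDual k (c • f)) ∧
    InSweedlerDual k (counit (R := k) (A := A)) ∧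
    (∀ f g : Module.Dual k A, InSweedlerDual k f → InSweedlerDual k g →
      InSweedlerDual k (convProd f g)) ∧
    (∀ f g h : Module.Dual k A, convProd (convProd f g) h = convProd f (convProd g h)) ∧
    (∀ f : Module.Dual k A, convProd (counit (R := k)) f = f ∧
      convProd f (counit (R := k)) = f) := by
  refine ⟨?_, ?_, ?_, ?_, ?_, ?_, ?_⟩
  · -- zero
    unfold InSweedlerDual
    have : Submodule.span k (Set.range fun s : A =>
        (0 : Module.Dual k A) ∘ₗ LinearMap.mulRight k s) ≤
        Submodule.span k ({0} : Set (Module.Dual k A)) := by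
      refine Submodule.span_mono ?_
      rintro _ ⟨s, rfl⟩
      dsimp only
      simp
    have : FiniteDimensional k (Submodule.span k ({0} : Set (Module.Dual k A))) :=
      FiniteDimensional.span_of_finite k (Set.finite_singleton _)
    exact Submodule.finiteDimensional_of_le ‹_›
  · -- add
    intro f g hf hg
    unfold InSweedlerDual at *
    have hle : Submodule.span k (Set.range fun s : A =>
        (f + g) ∘ₗ LinearMap.mulRight k s) ≤
        Submodule.span k (Set.range fun s : A => f ∘ₗ LinearMap.mulRight k s) ⊔
        Submodule.span k (Set.range fun s : A => g ∘ₗ LinearMap.mulRight k s) := by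
      rw [Submodule.span_le]
      rintro _ ⟨s, rfl⟩
      dsimp only
      have : (f + g) ∘ₗ LinearMap.mulRight k s =
          f ∘ₗ LinearMap.mulRight k s + g ∘ₗ LinearMap.mulRight k s := by
        ext x; simp
      rw [this]
      exact Submodule.add_mem_sup
        (Submodule.subset_span (Set.mem_range_self s))
        (Submodule.subset_span (Set.mem_range_self s))
    haveI := hf; haveI := hg
    exact Submodule.finiteDimensional_of_le hle
  · -- smul
    intro c f hf
    unfold InSweedlerDual at *
    have hle : Submodule.span k (Set.range fun s : A =>
        (c • f) ∘ₗ LinearMap.mulRight k s) ≤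
        Submodule.span k (Set.range fun s : A => f ∘ₗ LinearMap.mulRight k s) := by
      rw [Submodule.span_le]
      rintro _ ⟨s, rfl⟩
      dsimp only
      have : (c • f) ∘ₗ LinearMap.mulRight k s = c • (f ∘ₗ LinearMap.mulRight k s) := by
        ext x; simp
      rw [this]
      exact Submodule.smul_mem _ c (Submodule.subset_span (Set.mem_range_self s))
    haveI := hf
    exact Submodule.finiteDimensional_of_le hle
  · -- counit
    unfold InSweedlerDual
    have hle : Submodule.span k (Set.range fun s : A =>
        (counit (R := k) (A := A)) ∘ₗ LinearMap.mulRight k s) ≤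
        Submodule.span k ({counit (R := k) (A := A)} : Set (Module.Dual k A)) := by
      rw [Submodule.span_le]
      rintro _ ⟨s, rfl⟩
      dsimp only
      have : (counit (R := k) (A := A)) ∘ₗ LinearMap.mulRight k s =
          (counit (R := k) s) • counit (R := k) := by
        ext x
        simp [Bialgebra.counit_mul, mul_comm]
      rw [this]
      exact Submodule.smul_mem _ _ (Submodule.subset_span rfl)
    have : FiniteDimensional k
        (Submodule.span k ({counit (R := k) (A := A)} : Set (Module.Dual k A))) :=
      FiniteDimensional.span_of_finite k (Set.finite_singleton _)
    exact Submodule.finiteDimensional_of_le hle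
  · -- convolution closure
    intro f g hf hg
    unfold InSweedlerDual at *
    set V := Submodule.span k (Set.range fun s : A => f ∘ₗ LinearMap.mulRight k s) with hV
    set W := Submodule.span k (Set.range fun s : A => g ∘ₗ LinearMap.mulRight k s) with hW
    have hVW : (Submodule.map₂ (convBil (k := k) (A := A)) V W).FG :=
      Submodule.FG.map₂ _ (Module.Finite.iff_fg.mp hf) (Module.Finite.iff_fg.mp hg)
    have : FiniteDimensional k (Submodule.map₂ (convBil (k := k) (A := A)) V W) :=
      Module.Finite.iff_fg.mpr hVW
    have hle : Submodule.span k (Set.range fun s : A =>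
        (convProd f g) ∘ₗ LinearMap.mulRight k s) ≤
        Submodule.map₂ (convBil (k := k) (A := A)) V W := by
      rw [Submodule.span_le]
      rintro _ ⟨s, rfl⟩
      dsimp only
      rw [translate_convProd f g s (ℛ k s)]
      refine Submodule.sum_mem _ fun i _ => ?_
      exact Submodule.apply_mem_map₂ _
        (Submodule.subset_span (Set.mem_range_self _))
        (Submodule.subset_span (Set.mem_range_self _))
    exact Submodule.finiteDimensional_of_le hle
  · -- associativity
    intro f g h
    ext x
    set r := ℛ k x
    set r₁ : (i : r.ι) → Coalgebra.Repr k (r.left i) (A × A) := fun i => ℛ k (r.left i)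
    set r₂ : (i : r.ι) → Coalgebra.Repr k (r.right i) (A × A) := fun i => ℛ k (r.right i)
    have key := Coalgebra.sum_map_tmul_tmul_eq f g h x (repr := r) (a₁ := r₁) (a₂ := r₂)
    have key2 := congrArg ((TensorProduct.lid k k).toLinearMap ∘ₗ
      (LinearMap.lTensor k (TensorProduct.lid k k).toLinearMap)) key
    simp only [map_sum, LinearMap.coe_comp, Function.comp_apply, LinearMap.lTensor_tmul,
      LinearEquiv.coe_coe, TensorProduct.lid_tmul, smul_eq_mul] at key2
    rw [convProd_apply_repr _ _ x r, convProd_apply_repr _ _ x r]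
    calc ∑ i ∈ r.index, convProd f g (r.left i) * h (r.right i)
        = ∑ i ∈ r.index, ∑ j ∈ (r₁ i).index,
            f ((r₁ i).left j) * (g ((r₁ i).right j) * h (r.right i)) := by
          refine Finset.sum_congr rfl fun i _ => ?_
          rw [convProd_apply_repr _ _ _ (r₁ i), Finset.sum_mul]
          exact Finset.sum_congr rfl fun j _ => by ring
      _ = ∑ i ∈ r.index, ∑ j ∈ (r₂ i).index,
            f (r.left i) * (g ((r₂ i).left j) * h ((r₂ i).right j)) := key2.symm
      _ = ∑ i ∈ r.index, f (r.left i) * convProd g h (r.right i) := by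
          refine Finset.sum_congr rfl fun i _ => ?_
          rw [convProd_apply_repr _ _ _ (r₂ i), Finset.mul_sum]
  · -- unit laws
    intro f
    constructor
    · ext x
      set r := ℛ k x
      rw [convProd_apply_repr _ _ x r]
      have key := Coalgebra.sum_counit_tmul_map_eq f x (repr := r)
      have key2 := congrArg (TensorProduct.lid k k).toLinearMap key
      simp only [map_sum, LinearEquiv.coe_toLinearMap, TensorProduct.lid_tmul,
        smul_eq_mul, one_mul] at key2
      exact key2
    · ext x
      set r := ℛ k x
      rw [convProd_apply_repr _ _ x r]
      have key := Coalgebra.sum_map_tmul_counit_eq f x (repr := r)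
      have key2 := congrArg (TensorProduct.rid k k).toLinearMap key
      simp only [map_sum, LinearEquiv.coe_toLinearMap, TensorProduct.rid_tmul,
        smul_eq_mul, one_smul] at key2
      rw [show ∑ i ∈ r.index, f (r.left i) * counit (R := k) (r.right i)
          = ∑ i ∈ r.index, counit (R := k) (r.right i) * f (r.left i) from
        Finset.sum_congr rfl fun i _ => by ring]
      rw [key2, one_mul]
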